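/- Let k > 0 and ρ ∈ (0,1). Define the Beta-Gamma kernel Q(x, ·) on ℝ₊ as the law of y = b·x + c where b ∼ Beta(kρ, k(1−ρ)) and c ∼ Gamma(k(1−ρ), 1) are independent. Then Q is reversible with respect to the Gamma distribution Gamma(k, 1). -/

import Mathlib

open MeasureTheory ProbabilityTheory

/-- The Beta distribution with shape parameters `a`, `b`, as a measure on `ℝ`
with density `x^(a-1) (1-x)^(b-1) / B(a,b)` on `(0,1)`. -/
noncomputable def betaMeasure' (a b : ℝ) : Measure ℝ :=
  volume.withDensity fun x =>
    ENNReal.ofReal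
      ((Set.Ioo (0 : ℝ) 1).indicator
        (fun x => x ^ (a - 1) * (1 - x) ^ (b - 1) /
          (Real.Gamma a * Real.Gamma b / Real.Gamma (a + b))) x)

namespace Stmt3Aux

open Real Set
open scoped ENNReal NNReal

/-- The beta pdf as an `ℝ≥0∞`-valued function. -/
noncomputable def betaPDF (a b : ℝ) (x : ℝ) : ℝ≥0∞ :=
  ENNReal.ofReal
    ((Set.Ioo (0 : ℝ) 1).indicator
      (fun x => x ^ (a - 1) * (1 - x) ^ (b - 1) /
        (Real.Gamma a * Real.Gamma b / Real.Gamma (a + b))) x)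

lemma betaMeasure_eq (a b : ℝ) : betaMeasure' a b = volume.withDensity (betaPDF a b) := rfl

lemma measurable_betaPDF (a b : ℝ) : Measurable (betaPDF a b) := by
  apply ENNReal.measurable_ofReal.comp
  apply Measurable.indicator _ measurableSet_Ioo
  fun_prop

/-- joint density of `(x, y)` under `μ(dx) Q(x, dy)` -/
noncomputable def jointS (a b : ℝ) (x y : ℝ) : ℝ≥0∞ :=
  gammaPDF (a + b) 1 x * ∫⁻ t, betaPDF a b t * gammaPDF b 1 (y - t * x)

/-- the symmetric closed form -/
noncomputable def Wfun (a b : ℝ) (x y u : ℝ) : ℝ :=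
  if 0 < u ∧ u < x ∧ u < y then
    u ^ (a - 1) * ((x - u) ^ (b - 1) * ((y - u) ^ (b - 1) * Real.exp (u - (x + y)))) /
      (Real.Gamma a * Real.Gamma b * Real.Gamma b)
  else 0

lemma Wfun_symm (a b x y u : ℝ) : Wfun a b x y u = Wfun a b y x u := by
  unfold Wfun
  by_cases h : 0 < u ∧ u < x ∧ u < y
  · rw [if_pos h, if_pos ⟨h.1, h.2.2, h.2.1⟩]
    ring
  · rw [if_neg h, if_neg fun h2 => h ⟨h2.1, h2.2.2, h2.2.1⟩]

lemma measurable_Wfun (a b x y : ℝ) : Measurable (Wfun a b x y) := by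
  unfold Wfun
  apply Measurable.ite _ _ measurable_const
  · have : {u : ℝ | 0 < u ∧ u < x ∧ u < y} = Ioi 0 ∩ (Iio x ∩ Iio y) := by
      ext u; simp [mem_Ioi, mem_Iio, and_assoc]
    rw [this]
    exact measurableSet_Ioi.inter (measurableSet_Iio.inter measurableSet_Iio)
  · fun_prop

lemma point_eq (a b : ℝ) (ha : 0 < a) (hb : 0 < b) {x : ℝ} (hx : 0 < x) (y : ℝ)
    {u : ℝ} (hu : u ≠ y) :
    gammaPDF (a + b) 1 x * (betaPDF a b (x⁻¹ * u) * gammaPDF b 1 (y - x⁻¹ * u * x)) =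
      ENNReal.ofReal (x * Wfun a b x y u) := by
  have hxu : x⁻¹ * u * x = u := by field_simp
  rw [hxu]
  by_cases h : 0 < u ∧ u < x ∧ u < y
  · obtain ⟨h1, h2, h3⟩ := h
    have hmem : x⁻¹ * u ∈ Ioo (0 : ℝ) 1 := by
      constructor
      · positivity
      · rw [inv_mul_eq_div, div_lt_one hx]; exact h2
    have hΓa := Real.Gamma_pos_of_pos ha
    have hΓb := Real.Gamma_pos_of_pos hb
    have hΓab := Real.Gamma_pos_of_pos (by linarith : 0 < a + b)
    have hbpos : (0:ℝ) < x⁻¹ * u := hmem.1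
    have h1m : (0:ℝ) < 1 - x⁻¹ * u := by linarith [hmem.2]
    have hBnn : (0:ℝ) ≤ (x⁻¹ * u) ^ (a - 1) * (1 - x⁻¹ * u) ^ (b - 1) /
        (Real.Gamma a * Real.Gamma b / Real.Gamma (a + b)) :=
      div_nonneg (mul_nonneg (Real.rpow_nonneg hbpos.le _) (Real.rpow_nonneg h1m.le _))
        (div_nonneg (mul_nonneg hΓa.le hΓb.le) hΓab.le)
    have hAnn : (0:ℝ) ≤ (1:ℝ) ^ (a + b) / Real.Gamma (a + b) * x ^ (a + b - 1) *
        Real.exp (-(1 * x)) :=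
      mul_nonneg (mul_nonneg (div_nonneg (Real.rpow_nonneg zero_le_one _) hΓab.le)
        (Real.rpow_nonneg hx.le _)) (Real.exp_nonneg _)
    rw [Wfun, if_pos ⟨h1, h2, h3⟩, betaPDF, Set.indicator_of_mem hmem,
      gammaPDF_of_nonneg hx.le, gammaPDF_of_nonneg (by linarith : (0:ℝ) ≤ y - u),
      ← ENNReal.ofReal_mul hBnn, ← ENNReal.ofReal_mul hAnn]
    congr 1
    have e2 : Real.exp (u - (x + y)) = Real.exp (-(1 * x)) * Real.exp (-(1 * (y - u))) := by
      rw [← Real.exp_add]; congr 1; ring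
    rw [Real.one_rpow, Real.one_rpow, inv_mul_eq_div, Real.div_rpow h1.le hx.le,
      one_sub_div hx.ne', Real.div_rpow (by linarith) hx.le,
      show a + b - 1 = (a - 1) + ((b - 1) + 1) by ring, Real.rpow_add hx,
      Real.rpow_add hx, Real.rpow_one, e2]
    have hxa : (0:ℝ) < x ^ (a - 1) := Real.rpow_pos_of_pos hx _
    have hxb : (0:ℝ) < x ^ (b - 1) := Real.rpow_pos_of_pos hx _
    field_simp
  · rw [Wfun, if_neg h, mul_zero, ENNReal.ofReal_zero]
    rcases le_or_gt u 0 with hu0 | hu0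
    · have hnm : x⁻¹ * u ∉ Ioo (0 : ℝ) 1 := by
        intro hmem
        nlinarith [hmem.1, inv_pos.mpr hx]
      rw [betaPDF, Set.indicator_of_notMem hnm, ENNReal.ofReal_zero, zero_mul, mul_zero]
    · rcases le_or_gt x u with hxu' | hxu'
      · have hnm : x⁻¹ * u ∉ Ioo (0 : ℝ) 1 := by
          intro hmem
          have h2 := hmem.2
          rw [inv_mul_eq_div, div_lt_one hx] at h2
          linarith
        rw [betaPDF, Set.indicator_of_notMem hnm, ENNReal.ofReal_zero, zero_mul, mul_zero]
      · have hyu : y < u := by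
          rcases lt_trichotomy u y with h1 | h1 | h1
          · exact absurd ⟨hu0, hxu', h1⟩ h
          · exact absurd h1 hu
          · exact h1
        rw [gammaPDF_of_neg (by linarith : y - u < 0), mul_zero, mul_zero]

/-- scaling substitution: `jointS` has the symmetric closed form. -/
lemma jointS_eq (a b : ℝ) (ha : 0 < a) (hb : 0 < b) {x : ℝ} (hx : 0 < x) (y : ℝ) :
    jointS a b x y = ∫⁻ u, ENNReal.ofReal (Wfun a b x y u) := by
  have hγm : Measurable (gammaPDF b 1) :=
    ENNReal.measurable_ofReal.comp (measurable_gammaPDFReal b 1)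
  have hψm : Measurable fun t => betaPDF a b t * gammaPDF b 1 (y - t * x) :=
    (measurable_betaPDF a b).mul (hγm.comp (measurable_const.sub (measurable_id.mul_const x)))
  have h0 : (ENNReal.ofReal x) ≠ 0 := fun hc =>
    absurd (ENNReal.ofReal_eq_zero.mp hc) (not_le.mpr hx)
  have hT : (ENNReal.ofReal x) ≠ ⊤ := ENNReal.ofReal_ne_top
  have hfT : gammaPDF (a + b) 1 x ≠ ⊤ := by rw [gammaPDF_eq]; exact ENNReal.ofReal_ne_top
  have hscale : ∫⁻ u, betaPDF a b (x⁻¹ * u) * gammaPDF b 1 (y - x⁻¹ * u * x)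
      = ENNReal.ofReal x * ∫⁻ t, betaPDF a b t * gammaPDF b 1 (y - t * x) := by
    have h1 : ∫⁻ u, betaPDF a b (x⁻¹ * u) * gammaPDF b 1 (y - x⁻¹ * u * x)
        = ∫⁻ t, betaPDF a b t * gammaPDF b 1 (y - t * x)
          ∂(Measure.map (fun u => x⁻¹ * u) volume) :=
      (lintegral_map hψm (measurable_const_mul _)).symm
    rw [h1, Real.map_volume_mul_left (inv_ne_zero hx.ne'), lintegral_smul_measure, smul_eq_mul, inv_inv,
      abs_of_pos hx]
  have hGx : ∫⁻ t, betaPDF a b t * gammaPDF b 1 (y - t * x)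
      = (ENNReal.ofReal x)⁻¹ * ∫⁻ u, betaPDF a b (x⁻¹ * u) * gammaPDF b 1 (y - x⁻¹ * u * x) := by
    rw [hscale, ← mul_assoc, ENNReal.inv_mul_cancel h0 hT, one_mul]
  have hy : ∀ᵐ u : ℝ ∂volume, u ≠ y := by
    have hs : {u : ℝ | ¬ u ≠ y} = {y} := by ext u; simp
    rw [ae_iff, hs]
    exact measure_singleton y
  calc gammaPDF (a + b) 1 x * ∫⁻ t, betaPDF a b t * gammaPDF b 1 (y - t * x)
      = (ENNReal.ofReal x)⁻¹ *
        ∫⁻ u, gammaPDF (a + b) 1 x * (betaPDF a b (x⁻¹ * u) * gammaPDF b 1 (y - x⁻¹ * u * x)) := by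
        rw [lintegral_const_mul' _ _ hfT, hGx, mul_left_comm]
    _ = (ENNReal.ofReal x)⁻¹ * ∫⁻ u, ENNReal.ofReal (x * Wfun a b x y u) := by
        refine congrArg _ (lintegral_congr_ae ?_)
        filter_upwards [hy] with u hu
        exact point_eq a b ha hb hx y hu
    _ = (ENNReal.ofReal x)⁻¹ *
        (ENNReal.ofReal x * ∫⁻ u, ENNReal.ofReal (Wfun a b x y u)) := by
        rw [← lintegral_const_mul' _ _ hT]
        exact congrArg _ (lintegral_congr fun u => ENNReal.ofReal_mul hx.le)
    _ = ∫⁻ u, ENNReal.ofReal (Wfun a b x y u) := by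
        rw [← mul_assoc, ENNReal.inv_mul_cancel h0 hT, one_mul]

lemma jointS_symm (a b : ℝ) (ha : 0 < a) (hb : 0 < b) {x y : ℝ} (hx : x ≠ 0) (hy : y ≠ 0) :
    jointS a b x y = jointS a b y x := by
  have hneg : ∀ z w : ℝ, z < 0 → jointS a b z w = 0 := by
    intro z w hz
    simp only [jointS, gammaPDF_of_neg hz, zero_mul]
  have hneg2 : ∀ z w : ℝ, 0 < z → w < 0 → jointS a b z w = 0 := by
    intro z w hz hw
    have hz0 : ∀ t : ℝ, betaPDF a b t * gammaPDF b 1 (w - t * z) = 0 := by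
      intro t
      by_cases ht : t ∈ Ioo (0 : ℝ) 1
      · rw [gammaPDF_of_neg (by nlinarith [ht.1, ht.2] : w - t * z < 0), mul_zero]
      · rw [betaPDF, Set.indicator_of_notMem ht, ENNReal.ofReal_zero, zero_mul]
    simp only [jointS, lintegral_congr hz0, lintegral_zero, mul_zero]
  rcases hx.lt_or_gt with hxneg | hxpos
  · rcases hy.lt_or_gt with hyneg | hypos
    · rw [hneg _ _ hxneg, hneg _ _ hyneg]
    · rw [hneg _ _ hxneg, hneg2 _ _ hypos hxneg]
  · rcases hy.lt_or_gt with hyneg | hypos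
    · rw [hneg2 _ _ hxpos hyneg, hneg _ _ hyneg]
    · rw [jointS_eq a b ha hb hxpos y, jointS_eq a b ha hb hypos x]
      exact lintegral_congr fun u => by rw [Wfun_symm]

lemma key (a b : ℝ) (ha : 0 < a) (hb : 0 < b)
    (A B : Set ℝ) (hA : MeasurableSet A) (hB : MeasurableSet B) :
    ∫⁻ x in A,
        (((betaMeasure' a b).prod (gammaMeasure b 1)).map fun p => p.1 * x + p.2) B
        ∂(gammaMeasure (a + b) 1)
      = ∫⁻ x, ∫⁻ y, A.indicator 1 x * (B.indicator 1 y * jointS a b x y) := by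
  haveI : IsProbabilityMeasure (gammaMeasure b 1) := isProbabilityMeasure_gammaMeasure hb one_pos
  have hm : ∀ x : ℝ, Measurable fun p : ℝ × ℝ => p.1 * x + p.2 := fun x =>
    (measurable_fst.mul_const x).add measurable_snd
  have hγm : Measurable (gammaPDF b 1) :=
    ENNReal.measurable_ofReal.comp (measurable_gammaPDFReal b 1)
  have hμm : Measurable (gammaPDF (a + b) 1) :=
    ENNReal.measurable_ofReal.comp (measurable_gammaPDFReal (a + b) 1)
  have hβT : ∀ t : ℝ, betaPDF a b t ≠ ⊤ := fun t => by
    rw [betaPDF]; exact ENNReal.ofReal_ne_top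
  have hfT : ∀ x : ℝ, gammaPDF (a + b) 1 x ≠ ⊤ := fun x => by
    rw [gammaPDF_eq]; exact ENNReal.ofReal_ne_top
  have hiT : ∀ (S : Set ℝ) (y : ℝ), S.indicator (1 : ℝ → ℝ≥0∞) y ≠ ⊤ := fun S y => by
    by_cases h : y ∈ S <;> simp [h]
  have htrans : ∀ t x : ℝ, (∫⁻ c, B.indicator 1 (t * x + c) * gammaPDF b 1 c)
      = ∫⁻ y, B.indicator 1 y * gammaPDF b 1 (y - t * x) := by
    intro t x
    have h := lintegral_add_right_eq_self (μ := volume)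
      (fun y => B.indicator 1 y * gammaPDF b 1 (y - t * x)) (t * x)
    rw [← h]
    refine lintegral_congr fun c => ?_
    rw [add_comm, add_sub_cancel_right]
  have hQrep : ∀ x : ℝ,
      (((betaMeasure' a b).prod (gammaMeasure b 1)).map fun p => p.1 * x + p.2) B
        = ∫⁻ y, B.indicator 1 y * ∫⁻ t, betaPDF a b t * gammaPDF b 1 (y - t * x) := by
    intro x
    rw [Measure.map_apply (hm x) hB, Measure.prod_apply ((hm x) hB)]
    have hslice : ∀ t : ℝ,
        (gammaMeasure b 1) (Prod.mk t ⁻¹' ((fun p : ℝ × ℝ => p.1 * x + p.2) ⁻¹' B))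
          = ∫⁻ y, B.indicator 1 y * gammaPDF b 1 (y - t * x) := by
      intro t
      have hpre : (Prod.mk t ⁻¹' ((fun p : ℝ × ℝ => p.1 * x + p.2) ⁻¹' B))
          = (fun c => t * x + c) ⁻¹' B := rfl
      have hpreM : MeasurableSet ((fun c => t * x + c) ⁻¹' B) :=
        (measurable_id.const_add (t * x)) hB
      rw [hpre, gammaMeasure, withDensity_apply _ hpreM, ← htrans t x,
        ← lintegral_indicator hpreM]
      refine lintegral_congr fun c => ?_
      by_cases hc : t * x + c ∈ B
      · simp [Set.indicator_apply, Set.mem_preimage, hc]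
      · simp [Set.indicator_apply, Set.mem_preimage, hc]
    rw [lintegral_congr hslice, betaMeasure_eq,
      lintegral_withDensity_eq_lintegral_mul_non_measurable volume (measurable_betaPDF a b)
        (ae_of_all _ fun t => by rw [betaPDF]; exact ENNReal.ofReal_lt_top)]
    simp only [Pi.mul_apply]
    have hpull : ∀ t : ℝ,
        betaPDF a b t * ∫⁻ y, B.indicator 1 y * gammaPDF b 1 (y - t * x)
          = ∫⁻ y, betaPDF a b t * (B.indicator 1 y * gammaPDF b 1 (y - t * x)) :=
      fun t => (lintegral_const_mul' _ _ (hβT t)).symm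
    have hswapm : AEMeasurable
        (Function.uncurry fun t y : ℝ =>
          betaPDF a b t * (B.indicator 1 y * gammaPDF b 1 (y - t * x)))
        (volume.prod volume) := by
      refine Measurable.aemeasurable ?_
      exact ((measurable_betaPDF a b).comp measurable_fst).mul
        (((measurable_const.indicator hB).comp measurable_snd).mul
          (hγm.comp (measurable_snd.sub (measurable_fst.mul_const x))))
    rw [lintegral_congr hpull, lintegral_lintegral_swap hswapm]
    refine lintegral_congr fun y => ?_
    rw [← lintegral_const_mul' (B.indicator 1 y) _ (hiT B y)]
    refine lintegral_congr fun t => ?_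
    ring
  calc ∫⁻ x in A,
        (((betaMeasure' a b).prod (gammaMeasure b 1)).map fun p => p.1 * x + p.2) B
        ∂(gammaMeasure (a + b) 1)
      = ∫⁻ x in A, (gammaPDF (a + b) 1 * fun x : ℝ =>
          (((betaMeasure' a b).prod (gammaMeasure b 1)).map fun p : ℝ × ℝ => p.1 * x + p.2) B) x
          ∂volume := by
        rw [gammaMeasure, setLIntegral_withDensity_eq_setLIntegral_mul_non_measurable volume
          hμm _ hA (ae_of_all _ fun x => by rw [gammaPDF_eq]; exact ENNReal.ofReal_lt_top)]
    _ = ∫⁻ x, A.indicator 1 x * (gammaPDF (a + b) 1 x *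
          (((betaMeasure' a b).prod (gammaMeasure b 1)).map fun p => p.1 * x + p.2) B) := by
        rw [← lintegral_indicator hA]
        refine lintegral_congr fun x => ?_
        by_cases hxA : x ∈ A <;> simp [hxA]
    _ = ∫⁻ x, ∫⁻ y, A.indicator 1 x * (B.indicator 1 y * jointS a b x y) := by
        refine lintegral_congr fun x => ?_
        rw [hQrep x, ← lintegral_const_mul' _ _ (hfT x),
          ← lintegral_const_mul' _ _ (hiT A x)]
        refine lintegral_congr fun y => ?_
        simp only [jointS]
        ring

end Stmt3Aux

open Stmt3Aux in
theorem revAux (a b k : ℝ) (ha : 0 < a) (hb : 0 < b) (hab : a + b = k)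
    (A B : Set ℝ) (hA : MeasurableSet A) (hB : MeasurableSet B) :
    ∫⁻ x in A,
        (((betaMeasure' a b).prod (gammaMeasure b 1)).map fun p => p.1 * x + p.2) B
        ∂(gammaMeasure k 1)
      = ∫⁻ x in B,
        (((betaMeasure' a b).prod (gammaMeasure b 1)).map fun p => p.1 * x + p.2) A
        ∂(gammaMeasure k 1) := by
  subst hab
  rw [key a b ha hb A B hA hB, key a b ha hb B A hB hA]
  have hγm : Measurable (gammaPDF b 1) :=
    ENNReal.measurable_ofReal.comp (measurable_gammaPDFReal b 1)
  have hμm : Measurable (gammaPDF (a + b) 1) :=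
    ENNReal.measurable_ofReal.comp (measurable_gammaPDFReal (a + b) 1)
  have hSm : Measurable fun p : ℝ × ℝ => jointS a b p.1 p.2 := by
    simp only [jointS]
    refine (hμm.comp measurable_fst).mul ?_
    refine Measurable.lintegral_prod_right' (f := fun q : (ℝ × ℝ) × ℝ =>
      Stmt3Aux.betaPDF a b q.2 * gammaPDF b 1 (q.1.2 - q.2 * q.1.1)) ?_
    exact ((measurable_betaPDF a b).comp measurable_snd).mul
      (hγm.comp ((measurable_fst.snd).sub (measurable_snd.mul measurable_fst.fst)))
  have hfm : AEMeasurable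
      (Function.uncurry fun x y : ℝ =>
        B.indicator 1 x * (A.indicator 1 y * jointS a b x y)) (volume.prod volume) :=
    Measurable.aemeasurable <|
      ((measurable_const.indicator hB).comp measurable_fst).mul
        (((measurable_const.indicator hA).comp measurable_snd).mul hSm)
  rw [lintegral_lintegral_swap hfm]
  have h0 : ∀ᵐ z : ℝ ∂(volume : Measure ℝ), z ≠ 0 := by
    have hs : {z : ℝ | ¬ z ≠ 0} = {0} := by ext z; simp
    rw [ae_iff, hs]
    exact measure_singleton 0
  refine lintegral_congr_ae ?_
  filter_upwards [h0] with x hx0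
  refine lintegral_congr_ae ?_
  filter_upwards [h0] with y hy0
  rw [jointS_symm a b ha hb hx0 hy0]
  ring

/-- The Beta-Gamma kernel `Q(x,·)`, the law of `b·x + c` with
`b ∼ Beta(kρ, k(1−ρ))` and `c ∼ Gamma(k(1−ρ), 1)` independent, is reversible
with respect to `Gamma(k, 1)`. -/
theorem stmt3 (k ρ : ℝ) (hk : 0 < k) (hρ : ρ ∈ Set.Ioo (0 : ℝ) 1)
    (Q : ℝ → Measure ℝ)
    (hQ : Q = fun x =>
      ((betaMeasure' (k * ρ) (k * (1 - ρ))).prod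
        (gammaMeasure (k * (1 - ρ)) 1)).map fun p => p.1 * x + p.2)
    (μ : Measure ℝ) (hμ : μ = gammaMeasure k 1) :
    ∀ A B : Set ℝ, MeasurableSet A → MeasurableSet B →
      ∫⁻ x in A, Q x B ∂μ = ∫⁻ x in B, Q x A ∂μ := by
  intro A B hA hB
  subst hQ hμ
  exact revAux (k * ρ) (k * (1 - ρ)) k (by nlinarith [hρ.1, hρ.2])
    (by nlinarith [hρ.1, hρ.2]) (by ring) A B hA hB
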